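/- Let Φ_t(γ,θ) = (1/√(1+t²))·((1/2)(1+t√2)cos γ, (1/2)(1+t√2)sin γ, (1/2)(1−t√2)cos θ, (1/2)(1−t√2)sin θ, 1/√2). Define τ(Φ_t) = −4(∂²Φ_t/∂γ² + ∂²Φ_t/∂θ²) + |dΦ_t|²Φ_t, where |dΦ_t|² = 4(|∂Φ_t/∂γ|² + |∂Φ_t/∂θ|²). Then |τ(Φ_t)(γ,θ)|² = (4 + 8t²)/(t²+1)² for all (γ,θ). -/

import Mathlib

open Real

lemma dcos (a b : ℝ) : deriv (fun x => a * (b * Real.cos x)) = fun x => -(a * b * Real.sin x) := by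
  funext x
  have : HasDerivAt (fun x => a * (b * Real.cos x)) (a * (b * -Real.sin x)) x := by
    simpa using ((Real.hasDerivAt_cos x).const_mul b).const_mul a
  rw [this.deriv]; ring

lemma dsin (a b : ℝ) : deriv (fun x => a * (b * Real.sin x)) = fun x => a * b * Real.cos x := by
  funext x
  have : HasDerivAt (fun x => a * (b * Real.sin x)) (a * (b * Real.cos x)) x := by
    simpa using ((Real.hasDerivAt_sin x).const_mul b).const_mul a
  rw [this.deriv]; ring

lemma dnegsin (c : ℝ) : deriv (fun x => -(c * Real.sin x)) = fun x => -(c * Real.cos x) := by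
  funext x
  have : HasDerivAt (fun x => -(c * Real.sin x)) (-(c * Real.cos x)) x :=
    ((Real.hasDerivAt_sin x).const_mul c).neg
  rw [this.deriv]

lemma dcos' (c : ℝ) : deriv (fun x => c * Real.cos x) = fun x => -(c * Real.sin x) := by
  funext x
  have : HasDerivAt (fun x => c * Real.cos x) (c * -Real.sin x) x :=
    (Real.hasDerivAt_cos x).const_mul c
  rw [this.deriv]; ring

set_option maxHeartbeats 2000000 in
theorem tension_field_norm_of_variation
    (t : ℝ) (Φt : ℝ → ℝ → Fin 5 → ℝ)
    (hΦt : ∀ γ θ, Φt γ θ = fun i => (1 / Real.sqrt (1 + t ^ 2)) *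
      (![(1/2) * (1 + t * Real.sqrt 2) * cos γ, (1/2) * (1 + t * Real.sqrt 2) * sin γ,
        (1/2) * (1 - t * Real.sqrt 2) * cos θ, (1/2) * (1 - t * Real.sqrt 2) * sin θ,
        1 / Real.sqrt 2] i))
    (edens : ℝ → ℝ → ℝ)
    (hedens : ∀ γ θ, edens γ θ =
      4 * ((∑ i, (deriv (fun x => Φt x θ i) γ) ^ 2) +
           (∑ i, (deriv (fun y => Φt γ y i) θ) ^ 2)))
    (τ : ℝ → ℝ → Fin 5 → ℝ)
    (hτ : ∀ γ θ i, τ γ θ i =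
      -(-4 * (deriv (fun x => deriv (fun x' => Φt x' θ i) x) γ +
              deriv (fun y => deriv (fun y' => Φt γ y' i) y) θ)) +
        edens γ θ * Φt γ θ i) :
    ∀ γ θ, ∑ i, (τ γ θ i) ^ 2 = (4 + 8 * t ^ 2) / (t ^ 2 + 1) ^ 2 := by
  intro γ θ
  have h1 : (0:ℝ) < 1 + t ^ 2 := by positivity
  have hs : Real.sqrt (1 + t ^ 2) > 0 := Real.sqrt_pos.mpr h1
  have hs2 : Real.sqrt (1 + t ^ 2) ^ 2 = 1 + t ^ 2 := Real.sq_sqrt h1.le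
  have h2 : Real.sqrt 2 ^ 2 = 2 := Real.sq_sqrt (by norm_num)
  have h2p : Real.sqrt 2 > 0 := Real.sqrt_pos.mpr (by norm_num)
  simp only [Fin.sum_univ_five, hτ, hedens, hΦt]
  simp only [Matrix.cons_val_zero, Matrix.cons_val_one, Matrix.head_cons,
    Matrix.cons_val_two, Matrix.tail_cons, Matrix.cons_val_three, Matrix.cons_val_four]
  simp only [dcos, dsin, dnegsin, dcos', deriv_const']
  have pyg : Real.sin γ ^ 2 + Real.cos γ ^ 2 = 1 := Real.sin_sq_add_cos_sq γ
  have pyt : Real.sin θ ^ 2 + Real.cos θ ^ 2 = 1 := Real.sin_sq_add_cos_sq θ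
  have hE : (-(1 / √(1 + t ^ 2) * (1 / 2 * (1 + t * √2)) * Real.sin γ)) ^ 2 +
        (1 / √(1 + t ^ 2) * (1 / 2 * (1 + t * √2)) * Real.cos γ) ^ 2 + 0 ^ 2 + 0 ^ 2 + 0 ^ 2 +
        (0 ^ 2 + 0 ^ 2 + (-(1 / √(1 + t ^ 2) * (1 / 2 * (1 - t * √2)) * Real.sin θ)) ^ 2 +
          (1 / √(1 + t ^ 2) * (1 / 2 * (1 - t * √2)) * Real.cos θ) ^ 2 + 0 ^ 2)
      = (1 + 2 * t ^ 2) / (2 * (1 + t ^ 2)) := by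
    field_simp
    ring_nf
    simp only [hs2, h2, show √2 ^ 3 = 2 * √2 by rw [pow_succ, h2], show √2 ^ 4 = 4 by nlinarith [h2], show √(1 + t ^ 2) ^ 3 = (1 + t ^ 2) * √(1 + t ^ 2) by rw [pow_succ, hs2], show √(1 + t ^ 2) ^ 4 = (1 + t ^ 2) ^ 2 by rw [show (4:ℕ) = 2 * 2 from rfl, pow_mul, hs2], show Real.sin γ ^ 2 = 1 - Real.cos γ ^ 2 by linarith, show Real.sin θ ^ 2 = 1 - Real.cos θ ^ 2 by linarith]
    ring_nf
  rw [hE]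
  have h12 : (-(-4 * (-(1 / √(1 + t ^ 2) * (1 / 2 * (1 + t * √2)) * Real.cos γ) + 0)) +
        4 * ((1 + 2 * t ^ 2) / (2 * (1 + t ^ 2))) * (1 / √(1 + t ^ 2) * (1 / 2 * (1 + t * √2) * Real.cos γ))) ^ 2 +
      (-(-4 * (-(1 / √(1 + t ^ 2) * (1 / 2 * (1 + t * √2)) * Real.sin γ) + 0)) +
        4 * ((1 + 2 * t ^ 2) / (2 * (1 + t ^ 2))) * (1 / √(1 + t ^ 2) * (1 / 2 * (1 + t * √2) * Real.sin γ))) ^ 2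
      = (1 + t * √2) ^ 2 / (1 + t ^ 2) ^ 3 := by
    field_simp
    ring_nf
    simp only [hs2, h2, show √2 ^ 3 = 2 * √2 by rw [pow_succ, h2], show √2 ^ 4 = 4 by nlinarith [h2], show √(1 + t ^ 2) ^ 3 = (1 + t ^ 2) * √(1 + t ^ 2) by rw [pow_succ, hs2], show √(1 + t ^ 2) ^ 4 = (1 + t ^ 2) ^ 2 by rw [show (4:ℕ) = 2 * 2 from rfl, pow_mul, hs2], show Real.sin γ ^ 2 = 1 - Real.cos γ ^ 2 by linarith, show Real.sin θ ^ 2 = 1 - Real.cos θ ^ 2 by linarith]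
    ring_nf
  have h34 : (-(-4 * (0 + -(1 / √(1 + t ^ 2) * (1 / 2 * (1 - t * √2)) * Real.cos θ))) +
        4 * ((1 + 2 * t ^ 2) / (2 * (1 + t ^ 2))) * (1 / √(1 + t ^ 2) * (1 / 2 * (1 - t * √2) * Real.cos θ))) ^ 2 +
      (-(-4 * (0 + -(1 / √(1 + t ^ 2) * (1 / 2 * (1 - t * √2)) * Real.sin θ))) +
        4 * ((1 + 2 * t ^ 2) / (2 * (1 + t ^ 2))) * (1 / √(1 + t ^ 2) * (1 / 2 * (1 - t * √2) * Real.sin θ))) ^ 2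
      = (1 - t * √2) ^ 2 / (1 + t ^ 2) ^ 3 := by
    field_simp
    ring_nf
    simp only [hs2, h2, show √2 ^ 3 = 2 * √2 by rw [pow_succ, h2], show √2 ^ 4 = 4 by nlinarith [h2], show √(1 + t ^ 2) ^ 3 = (1 + t ^ 2) * √(1 + t ^ 2) by rw [pow_succ, hs2], show √(1 + t ^ 2) ^ 4 = (1 + t ^ 2) ^ 2 by rw [show (4:ℕ) = 2 * 2 from rfl, pow_mul, hs2], show Real.sin γ ^ 2 = 1 - Real.cos γ ^ 2 by linarith, show Real.sin θ ^ 2 = 1 - Real.cos θ ^ 2 by linarith]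
    ring_nf
  have h5 : (-(-4 * ((0:ℝ) + 0)) +
        4 * ((1 + 2 * t ^ 2) / (2 * (1 + t ^ 2))) * (1 / √(1 + t ^ 2) * (1 / √2))) ^ 2
      = 2 * (1 + 2 * t ^ 2) ^ 2 / (1 + t ^ 2) ^ 3 := by
    field_simp
    ring_nf
    simp only [hs2, h2, show √2 ^ 3 = 2 * √2 by rw [pow_succ, h2], show √2 ^ 4 = 4 by nlinarith [h2], show √(1 + t ^ 2) ^ 3 = (1 + t ^ 2) * √(1 + t ^ 2) by rw [pow_succ, hs2], show √(1 + t ^ 2) ^ 4 = (1 + t ^ 2) ^ 2 by rw [show (4:ℕ) = 2 * 2 from rfl, pow_mul, hs2], show Real.sin γ ^ 2 = 1 - Real.cos γ ^ 2 by linarith, show Real.sin θ ^ 2 = 1 - Real.cos θ ^ 2 by linarith]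
    ring_nf
  rw [show ∀ a b c d e : ℝ, a + b + c + d + e = (a + b) + (c + d) + e from fun _ _ _ _ _ => by ring]
  rw [h12, h34, h5]
  field_simp
  linear_combination (2*t^2*(1+t^2)^2) * h2
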